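/- arXiv:1211.3266 — 2 statements merged into one kernel-verified Lean document; each statement's English description precedes it below -/
import Mathlib

section
/- If ξ ∈ H is square-integrable, then the linear map ⟪ξ| : H → L²(G) sending η to the coefficient function t ↦ ⟨γ_tξ, η⟩ is a bounded operator, and its Hilbert-space adjoint |ξ⟫ := (⟪ξ|)* : L²(G) → H satisfies |ξ⟫f = ∫ f(t) γ_tξ dμ(t) (Bochner integral) for every f ∈ C_c(G). (Hilbert-space, group case of the construction of the bra-ket operators in Section 3.) -/
open MeasureTheory

noncomputable section

variable {G : Type*} [Group G] [TopologicalSpace G] [IsTopologicalGroup G]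
  [MeasurableSpace G] [BorelSpace G] [LocallyCompactSpace G] [T2Space G]
  {H : Type*} [NormedAddCommGroup H] [InnerProductSpace ℂ H] [CompleteSpace H]

/-- A vector `ξ` is square-integrable (for the strongly continuous unitary representation `γ`)
if all coefficient functions `t ↦ ⟨γ_t ξ, η⟩` belong to `L²(G,μ)`. -/
def SqInt (μ : Measure G) (γ : G → H →L[ℂ] H) (ξ : H) : Prop :=
  ∀ η : H, MemLp (fun t => (inner ℂ (γ t ξ) η : ℂ)) 2 μ

/-- `T` is the "bra" operator `⟪ξ|` of `ξ`: a bounded operator `H → L²(G)` whose value at `η`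
is (a.e.) the coefficient function `t ↦ ⟨γ_t ξ, η⟩`. -/
def IsBra (μ : Measure G) (γ : G → H →L[ℂ] H) (ξ : H) (T : H →L[ℂ] Lp ℂ 2 μ) : Prop :=
  ∀ η : H, ⇑(T η) =ᵐ[μ] fun t => (inner ℂ (γ t ξ) η : ℂ)

/-- If `ξ` is a square-integrable vector, then the map `η ↦ (t ↦ ⟨γ_t ξ, η⟩)` is a bounded
operator `⟪ξ| : H → L²(G)`, and its Hilbert-space adjoint `|ξ⟫ = ⟪ξ|*` satisfies
`|ξ⟫ f = ∫ f(t) γ_t ξ dμ(t)` for every `f ∈ C_c(G)`. -/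
theorem stmt6
    (μ : Measure G) [μ.IsHaarMeasure]
    (γ : G → H →L[ℂ] H)
    (hone : γ 1 = ContinuousLinearMap.id ℂ H)
    (hmul : ∀ s t : G, γ (s * t) = (γ s).comp (γ t))
    (hinn : ∀ (t : G) (ξ η : H), (inner ℂ (γ t ξ) (γ t η) : ℂ) = inner ℂ ξ η)
    (hcont : ∀ ξ : H, Continuous fun t => γ t ξ)
    (ξ : H) (hξ : SqInt μ γ ξ) :
    ∃ T : H →L[ℂ] Lp ℂ 2 μ, IsBra μ γ ξ T ∧
      ∀ (f : G → ℂ) (hf : MemLp f 2 μ), Continuous f → HasCompactSupport f →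
        ContinuousLinearMap.adjoint T (MemLp.toLp f hf) = ∫ t, f t • (γ t) ξ ∂μ := by
  classical
  -- the underlying linear map
  let T₀ : H →ₗ[ℂ] Lp ℂ 2 μ :=
    { toFun := fun η => (hξ η).toLp _
      map_add' := fun a b => by
        rw [← MemLp.toLp_add (hξ a) (hξ b)]
        exact MemLp.toLp_congr _ _
          (Filter.EventuallyEq.of_eq (funext fun t => inner_add_right _ _ _))
      map_smul' := fun c a => by
        simp only [RingHom.id_apply]
        rw [← MemLp.toLp_const_smul c (hξ a)]
        refine MemLp.toLp_congr _ _ (Filter.EventuallyEq.of_eq (funext fun t => ?_))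
        simp [inner_smul_right] }
  have hT₀ae : ∀ η : H, ⇑(T₀ η) =ᵐ[μ] fun t => (inner ℂ (γ t ξ) η : ℂ) := fun η =>
    (hξ η).coeFn_toLp
  -- boundedness, by the closed graph theorem
  have hcontT : Continuous T₀ := by
    refine T₀.continuous_of_seq_closed_graph fun u x y hu hTu => ?_
    have hmeas : TendstoInMeasure μ (fun n => (T₀ (u n) : Lp ℂ 2 μ)) Filter.atTop y :=
      tendstoInMeasure_of_tendsto_Lp hTu
    obtain ⟨ns, hns, hae⟩ := hmeas.exists_seq_tendsto_ae
    have hux : Filter.Tendsto (fun n => u (ns n)) Filter.atTop (nhds x) :=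
      hu.comp hns.tendsto_atTop
    have hall : ∀ᵐ t ∂μ, ∀ n : ℕ, (T₀ (u (ns n))) t = inner ℂ (γ t ξ) (u (ns n)) :=
      (ae_all_iff).2 fun n => hT₀ae (u (ns n))
    refine (Lp.ext ?_).symm
    filter_upwards [hae, hall, hT₀ae x] with t ht h1 h2
    have h3 : Filter.Tendsto (fun n => (inner ℂ (γ t ξ) (u (ns n)) : ℂ)) Filter.atTop
        (nhds (inner ℂ (γ t ξ) x)) :=
      ((continuous_inner.comp (continuous_const.prodMk continuous_id)).tendsto x).comp hux
    have h4 : Filter.Tendsto (fun n => (T₀ (u (ns n))) t) Filter.atTop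
        (nhds (inner ℂ (γ t ξ) x)) := by
      simpa only [funext h1] using h3
    rw [h2]
    exact tendsto_nhds_unique h4 ht
  refine ⟨⟨T₀, hcontT⟩, hT₀ae, ?_⟩
  intro f hf hfc hfs
  -- integrability of the Bochner integrand
  have hFc : Continuous fun t => f t • γ t ξ := hfc.smul (hcont ξ)
  have hFs : HasCompactSupport fun t => f t • γ t ξ := by
    refine HasCompactSupport.mono hfs ?_
    intro t ht
    simp only [Function.mem_support] at ht ⊢
    intro h0
    exact ht (by simp [h0])
  have hint : Integrable (fun t => f t • γ t ξ) μ := hFc.integrable_of_hasCompactSupport hFs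
  -- compare inner products against arbitrary vectors
  refine ext_inner_left ℂ fun v => ?_
  rw [ContinuousLinearMap.adjoint_inner_right, ← integral_inner hint v]
  have hTv : ⇑((⟨T₀, hcontT⟩ : H →L[ℂ] Lp ℂ 2 μ) v) =ᵐ[μ] fun t => (inner ℂ (γ t ξ) v : ℂ) :=
    hT₀ae v
  rw [L2.inner_def ((⟨T₀, hcontT⟩ : H →L[ℂ] Lp ℂ 2 μ) v) (MemLp.toLp f hf)]
  refine integral_congr_ae ?_
  filter_upwards [hTv, hf.coeFn_toLp] with t h1 h2
  simp only [h1, h2, RCLike.inner_apply, inner_smul_right, ← inner_conj_symm v (γ t ξ)]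

end
end

section
/- Suppose G is compact with normalized Haar measure μ and γ is a strongly continuous unitary representation of G on a complex Hilbert space H. Then the closed linear span of the averaged rank-one operators {∫_G γ_t∘(|ξ⟩⟨η|)∘γ_t⁻¹ dμ(t) : ξ, η ∈ H} (Bochner integrals in B(H)) equals the fixed point algebra of compact operators {x ∈ K(H) : γ_t∘x = x∘γ_t for all t ∈ G}. (Hilbert-space case of Proposition 398: for compact 𝔾, the generalized fixed point algebra Fix(E) is the ordinary fixed point algebra {x ∈ K(E) : δ(x) = x⊗1}.) -/
open MeasureTheory

noncomputable section

set_option maxHeartbeats 2000000 in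
/-- For a compact group `G` with normalized Haar measure `μ` and a strongly continuous
unitary representation `γ` on a Hilbert space `H`, the closed linear span of the averaged
rank-one operators `∫ γ_t∘|ξ⟩⟨η|∘γ_{t⁻¹} dμ(t)` (`ξ, η ∈ H`) equals the fixed point algebra
`{x ∈ K(H) : γ_t∘x = x∘γ_t for all t}` of compact operators. -/
theorem stmt19
    {G : Type*} [Group G] [TopologicalSpace G] [IsTopologicalGroup G] [CompactSpace G]
    [MeasurableSpace G] [BorelSpace G] [T2Space G]
    (μ : Measure G) [μ.IsHaarMeasure] [IsProbabilityMeasure μ]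
    {H : Type*} [NormedAddCommGroup H] [InnerProductSpace ℂ H] [CompleteSpace H]
    (γ : G → H →L[ℂ] H)
    (hone : γ 1 = ContinuousLinearMap.id ℂ H)
    (hmul : ∀ s t : G, γ (s * t) = (γ s).comp (γ t))
    (hinn : ∀ (t : G) (ξ η : H), (inner ℂ (γ t ξ) (γ t η) : ℂ) = inner ℂ ξ η)
    (hcont : ∀ ξ : H, Continuous fun t => γ t ξ) :
    closure (Submodule.span ℂ {x : H →L[ℂ] H | ∃ ξ η : H,
        x = ∫ t, (γ t).comp ((((innerSL ℂ) η).smulRight ξ).comp (γ t⁻¹)) ∂μ} :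
      Set (H →L[ℂ] H))
    = {x : H →L[ℂ] H | IsCompactOperator ⇑x ∧ ∀ t : G, (γ t).comp x = x.comp (γ t)} := by
  classical
  -- Basic facts about the representation
  have hid : ∀ t : G, (γ t).comp (γ t⁻¹) = ContinuousLinearMap.id ℂ H := by
    intro t
    rw [← hmul, mul_inv_cancel, hone]
  have hid' : ∀ (t : G) (ζ : H), γ t (γ t⁻¹ ζ) = ζ := by
    intro t ζ
    have := congrArg (fun f : H →L[ℂ] H => f ζ) (hid t)
    simpa using this
  have hnorm : ∀ (t : G) (ζ : H), ‖γ t ζ‖ = ‖ζ‖ := by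
    intro t ζ
    rw [@norm_eq_sqrt_re_inner ℂ _ _ _ _ (γ t ζ), hinn, ← @norm_eq_sqrt_re_inner ℂ]
  have hγle : ∀ t : G, ‖γ t‖ ≤ 1 := fun t =>
    ContinuousLinearMap.opNorm_le_bound _ zero_le_one fun ζ => by rw [hnorm, one_mul]
  have hconj : ∀ (t : G) (ξ η : H),
      (γ t).comp ((((innerSL ℂ) η).smulRight ξ).comp (γ t⁻¹))
        = ((innerSL ℂ) (γ t η)).smulRight (γ t ξ) := by
    intro t ξ η
    ext ζ
    have h1 : (inner ℂ (γ t η) ζ : ℂ) = inner ℂ η (γ t⁻¹ ζ) := by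
      conv_lhs => rw [← hid' t ζ]
      exact hinn t η (γ t⁻¹ ζ)
    simp only [ContinuousLinearMap.comp_apply, ContinuousLinearMap.smulRight_apply,
      innerSL_apply_apply, _root_.map_smul, h1]
  have hcont1 : ∀ ξ η : H,
      Continuous fun t => (γ t).comp ((((innerSL ℂ) η).smulRight ξ).comp (γ t⁻¹)) := by
    intro ξ η
    simp only [hconj]
    have h1 : Continuous fun t =>
        (ContinuousLinearMap.smulRightL ℂ H H) ((innerSL ℂ) (γ t η)) :=
      (ContinuousLinearMap.smulRightL ℂ H H).continuous.comp
        ((innerSL ℂ).continuous.comp (hcont η))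
    exact h1.clm_apply (hcont ξ)
  have hint1 : ∀ ξ η : H,
      Integrable (fun t => (γ t).comp ((((innerSL ℂ) η).smulRight ξ).comp (γ t⁻¹))) μ :=
    fun ξ η => (hcont1 ξ η).integrable_of_hasCompactSupport (isClosed_tsupport _).isCompact
  have hcpt1 : ∀ ξ η : H, IsCompactOperator ⇑(((innerSL ℂ) η).smulRight ξ) := by
    intro ξ η
    refine ⟨(fun a : ℂ => a • ξ) '' Metric.closedBall 0 ‖(innerSL ℂ) η‖,
      (isCompact_closedBall _ _).image (continuous_id.smul continuous_const), ?_⟩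
    refine Filter.mem_of_superset (Metric.closedBall_mem_nhds (0 : H) one_pos) ?_
    intro ζ hζ
    refine ⟨(innerSL ℂ) η ζ, ?_, rfl⟩
    rw [Metric.mem_closedBall, dist_zero_right]
    calc ‖(innerSL ℂ) η ζ‖ ≤ ‖(innerSL ℂ) η‖ * ‖ζ‖ := ((innerSL ℂ) η).le_opNorm ζ
      _ ≤ ‖(innerSL ℂ) η‖ := mul_le_of_le_one_right (norm_nonneg _)
          (by simpa [dist_zero_right] using hζ)
  -- the averaged operator commutes with the representation
  have hcommInt : ∀ z : H →L[ℂ] H,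
      Integrable (fun t => (γ t).comp (z.comp (γ t⁻¹))) μ → ∀ s : G,
      (γ s).comp (∫ t, (γ t).comp (z.comp (γ t⁻¹)) ∂μ)
        = (∫ t, (γ t).comp (z.comp (γ t⁻¹)) ∂μ).comp (γ s) := by
    intro z hz s
    have h1 : ∀ t : G, (γ s).comp ((γ t).comp (z.comp (γ t⁻¹)))
        = ((γ (s * t)).comp (z.comp (γ (s * t)⁻¹))).comp (γ s) := by
      intro t
      have e : (γ (s * t)⁻¹).comp (γ s) = γ t⁻¹ := by
        rw [← hmul]
        congr 1
        group
      rw [ContinuousLinearMap.comp_assoc, ContinuousLinearMap.comp_assoc, e,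
        ← ContinuousLinearMap.comp_assoc, ← hmul]
    calc (γ s).comp (∫ t, (γ t).comp (z.comp (γ t⁻¹)) ∂μ)
        = ∫ t, (γ s).comp ((γ t).comp (z.comp (γ t⁻¹))) ∂μ :=
          ((ContinuousLinearMap.compL ℂ H H H (γ s)).integral_comp_comm hz).symm
      _ = ∫ t, ((γ (s * t)).comp (z.comp (γ (s * t)⁻¹))).comp (γ s) ∂μ := by
          simp only [h1]
      _ = ∫ t, ((γ t).comp (z.comp (γ t⁻¹))).comp (γ s) ∂μ :=
          integral_mul_left_eq_self (fun u => ((γ u).comp (z.comp (γ u⁻¹))).comp (γ s)) s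
      _ = (∫ t, (γ t).comp (z.comp (γ t⁻¹)) ∂μ).comp (γ s) :=
          ((ContinuousLinearMap.compL ℂ H H H).flip (γ s)).integral_comp_comm hz
  apply Set.Subset.antisymm
  · -- closure of span ⊆ fixed point algebra
    have hTclosed : IsClosed {x : H →L[ℂ] H |
        IsCompactOperator ⇑x ∧ ∀ t : G, (γ t).comp x = x.comp (γ t)} := by
      have h2 : IsClosed {x : H →L[ℂ] H | ∀ t : G, (γ t).comp x = x.comp (γ t)} := by
        have : {x : H →L[ℂ] H | ∀ t : G, (γ t).comp x = x.comp (γ t)} =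
            ⋂ t : G, {x | (ContinuousLinearMap.compL ℂ H H H (γ t)) x
              = ((ContinuousLinearMap.compL ℂ H H H).flip (γ t)) x} := by
          ext x
          simp [ContinuousLinearMap.compL_apply, ContinuousLinearMap.flip_apply]
        rw [this]
        exact isClosed_iInter fun t =>
          isClosed_eq (ContinuousLinearMap.continuous _) (ContinuousLinearMap.continuous _)
      have : {x : H →L[ℂ] H | IsCompactOperator ⇑x ∧ ∀ t : G, (γ t).comp x = x.comp (γ t)}
          = {x : H →L[ℂ] H | IsCompactOperator ⇑x} ∩
            {x : H →L[ℂ] H | ∀ t : G, (γ t).comp x = x.comp (γ t)} := rfl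
      rw [this]
      exact isClosed_setOf_isCompactOperator.inter h2
    refine closure_minimal ?_ hTclosed
    let T' : Submodule ℂ (H →L[ℂ] H) :=
      { carrier := {x | IsCompactOperator ⇑x ∧ ∀ t : G, (γ t).comp x = x.comp (γ t)}
        add_mem' := by
          rintro a b ⟨ha1, ha2⟩ ⟨hb1, hb2⟩
          exact ⟨by simpa using ha1.add hb1, fun t => by
            simp only [ContinuousLinearMap.comp_add, ContinuousLinearMap.add_comp,
              ha2 t, hb2 t]⟩
        zero_mem' := ⟨by simpa using isCompactOperator_zero, fun t => by simp⟩
        smul_mem' := by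
          rintro c a ⟨ha1, ha2⟩
          exact ⟨by simpa using ha1.smul c, fun t => by
            simp only [ContinuousLinearMap.comp_smul, ContinuousLinearMap.smul_comp,
              ha2 t]⟩ }
    have hST : {x : H →L[ℂ] H | ∃ ξ η : H,
        x = ∫ t, (γ t).comp ((((innerSL ℂ) η).smulRight ξ).comp (γ t⁻¹)) ∂μ} ⊆ (T' : Set _) := by
      rintro x ⟨ξ, η, rfl⟩
      constructor
      · have hconv : Convex ℝ {y : H →L[ℂ] H | IsCompactOperator ⇑y} := by
          intro a ha b hb p q hp hq hpq
          simpa using IsCompactOperator.add (ha.smul p) (hb.smul q)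
        exact hconv.integral_mem isClosed_setOf_isCompactOperator
          (Filter.Eventually.of_forall fun t => by
            show IsCompactOperator _
            rw [hconj]
            exact hcpt1 _ _) (hint1 ξ η)
      · exact hcommInt _ (hint1 ξ η)
    exact (Submodule.span_le.mpr hST : Submodule.span ℂ _ ≤ T')
  · -- fixed point algebra ⊆ closure of span
    rintro x ⟨hxc, hxf⟩
    have hfix : ∀ t : G, (γ t).comp (x.comp (γ t⁻¹)) = x := by
      intro t
      rw [← ContinuousLinearMap.comp_assoc, hxf t, ContinuousLinearMap.comp_assoc, hid t,
        ContinuousLinearMap.comp_id]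
    rw [Metric.mem_closure_iff]
    intro ε hε
    set δ := ε / 3 with hδdef
    have hδ0 : 0 < δ := by positivity
    -- finite δ-net for the image of the closed unit ball
    have hxc' : IsCompactOperator ⇑(x.toLinearMap) := hxc
    have hKcpt : IsCompact (closure (⇑x.toLinearMap '' Metric.closedBall 0 1)) :=
      hxc'.isCompact_closure_image_closedBall 1
    obtain ⟨s, hsfin, hscov⟩ := (Metric.totallyBounded_iff.mp
      (hKcpt.totallyBounded.subset subset_closure)) δ hδ0
    -- the finite-dimensional subspace spanned by the net
    let K : Submodule ℂ H := Submodule.span ℂ s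
    haveI : FiniteDimensional ℂ K := FiniteDimensional.span_of_finite ℂ hsfin
    let b := stdOrthonormalBasis ℂ K
    let n := Module.finrank ℂ K
    -- the finite rank approximant as a sum of rank-one operators
    obtain ⟨f, hfdef⟩ : ∃ f : Fin n → (H →L[ℂ] H), ∀ i : Fin n, f i
        = ((innerSL ℂ) ((ContinuousLinearMap.adjoint x) (b i))).smulRight ((b i : H)) :=
      ⟨_, fun _ => rfl⟩
    obtain ⟨F, hFdef⟩ : ∃ F : H →L[ℂ] H, F = ∑ i : Fin n, f i := ⟨_, rfl⟩
    have hFval : ∀ ζ : H, F ζ = (K.orthogonalProjectionOnto (x ζ) : H) := by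
      intro ζ
      rw [b.orthogonalProjectionOnto_apply_eq_sum]
      rw [show F ζ = ∑ i : Fin n,
          (inner ℂ ((ContinuousLinearMap.adjoint x) (b i)) ζ : ℂ) • ((b i : H)) from by
        rw [hFdef]
        simp only [ContinuousLinearMap.sum_apply, hfdef,
          ContinuousLinearMap.smulRight_apply, innerSL_apply_apply]]
      push_cast
      refine Finset.sum_congr rfl fun i _ => ?_
      rw [ContinuousLinearMap.adjoint_inner_left]
    -- F approximates x within 2δ
    have hstep1 : ∀ ζ : H, ‖ζ‖ ≤ 1 → ‖x ζ - F ζ‖ ≤ 2 * δ := by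
      intro ζ hζ
      have hmem : x ζ ∈ ⇑x.toLinearMap '' Metric.closedBall 0 1 :=
        ⟨ζ, by simpa [Metric.mem_closedBall, dist_zero_right] using hζ, rfl⟩
      obtain ⟨y, hys, hxy⟩ := Set.mem_iUnion₂.mp (hscov hmem)
      have hyK : y ∈ K := Submodule.subset_span hys
      have hPy : (K.orthogonalProjectionOnto y : H) = y := Submodule.starProjection_eq_self_iff.mpr hyK
      have hd : ‖x ζ - y‖ < δ := by
        rw [← dist_eq_norm]
        exact Metric.mem_ball.mp hxy
      have h2 : ‖y - (K.orthogonalProjectionOnto (x ζ) : H)‖ ≤ ‖y - x ζ‖ := by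
        have he : y - (K.orthogonalProjectionOnto (x ζ) : H)
            = ((K.orthogonalProjectionOnto (y - x ζ)) : H) := by
          rw [map_sub, Submodule.coe_sub, hPy]
        rw [he]
        calc ‖(K.orthogonalProjectionOnto (y - x ζ) : H)‖
            = ‖K.orthogonalProjectionOnto (y - x ζ)‖ := rfl
          _ ≤ ‖K.orthogonalProjectionOnto‖ * ‖y - x ζ‖ := (K.orthogonalProjectionOnto).le_opNorm _
          _ ≤ 1 * ‖y - x ζ‖ := by
              gcongr
              exact Submodule.orthogonalProjectionOnto_norm_le K
          _ = ‖y - x ζ‖ := one_mul _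
      calc ‖x ζ - F ζ‖ = ‖x ζ - (K.orthogonalProjectionOnto (x ζ) : H)‖ := by rw [hFval]
        _ ≤ ‖x ζ - y‖ + ‖y - (K.orthogonalProjectionOnto (x ζ) : H)‖ := norm_sub_le_norm_sub_add_norm_sub _ _ _
        _ ≤ δ + δ := add_le_add hd.le (h2.trans (by rw [norm_sub_rev]; exact hd.le))
        _ = 2 * δ := by ring
    have hkey : ∀ ζ : H, ‖x ζ - F ζ‖ ≤ 2 * δ * ‖ζ‖ := by
      intro ζ
      rcases eq_or_ne ζ 0 with rfl | hζ0
      · simp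
      · have hc : (0 : ℝ) < ‖ζ‖ := norm_pos_iff.mpr hζ0
        have h1 := hstep1 ((‖ζ‖⁻¹ : ℝ) • ζ)
          (by rw [norm_smul, norm_inv, norm_norm, inv_mul_cancel₀ hc.ne'])
        have h2 : x ((‖ζ‖⁻¹ : ℝ) • ζ) - F ((‖ζ‖⁻¹ : ℝ) • ζ)
            = (‖ζ‖⁻¹ : ℝ) • (x ζ - F ζ) := by
          rw [ContinuousLinearMap.map_smul_of_tower, ContinuousLinearMap.map_smul_of_tower,
            smul_sub]
        rw [h2, norm_smul, norm_inv, norm_norm] at h1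
        calc ‖x ζ - F ζ‖ = ‖ζ‖ * (‖ζ‖⁻¹ * ‖x ζ - F ζ‖) := by
              field_simp
          _ ≤ ‖ζ‖ * (2 * δ) := by gcongr
          _ = 2 * δ * ‖ζ‖ := by ring
    have hxF : ‖x - F‖ ≤ 2 * δ := by
      refine ContinuousLinearMap.opNorm_le_bound _ (by positivity) fun ζ => ?_
      simpa [ContinuousLinearMap.sub_apply] using hkey ζ
    -- the averaged approximant lies in the span
    set y : H →L[ℂ] H := ∑ i : Fin n, ∫ t, (γ t).comp ((f i).comp (γ t⁻¹)) ∂μ with hydef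
    have hymem : y ∈ (Submodule.span ℂ {x : H →L[ℂ] H | ∃ ξ η : H,
        x = ∫ t, (γ t).comp ((((innerSL ℂ) η).smulRight ξ).comp (γ t⁻¹)) ∂μ} : Set (H →L[ℂ] H)) := by
      refine Submodule.sum_mem _ fun i _ => Submodule.subset_span ?_
      exact ⟨(b i : H), (ContinuousLinearMap.adjoint x) (b i), by rw [hfdef]⟩
    -- the averaging identity
    have hsumconj : ∀ t : G, (γ t).comp (F.comp (γ t⁻¹))
        = ∑ i : Fin n, (γ t).comp ((f i).comp (γ t⁻¹)) := by
      intro t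
      rw [hFdef, ContinuousLinearMap.finset_sum_comp, ContinuousLinearMap.comp_finset_sum]
    have hfint : ∀ i : Fin n, Integrable (fun t => (γ t).comp ((f i).comp (γ t⁻¹))) μ := by
      intro i
      rw [hfdef]
      exact hint1 _ _
    have hFint : Integrable (fun t => (γ t).comp (F.comp (γ t⁻¹))) μ := by
      rw [show (fun t => (γ t).comp (F.comp (γ t⁻¹)))
          = fun t => ∑ i : Fin n, (γ t).comp ((f i).comp (γ t⁻¹)) from funext hsumconj]
      exact integrable_finset_sum _ fun i _ => hfint i
    have hyeq : y = ∫ t, (γ t).comp (F.comp (γ t⁻¹)) ∂μ := by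
      rw [show (fun t => (γ t).comp (F.comp (γ t⁻¹)))
          = fun t => ∑ i : Fin n, (γ t).comp ((f i).comp (γ t⁻¹)) from funext hsumconj]
      rw [integral_finset_sum _ fun i _ => hfint i]
    have hxy : x - y = ∫ t, (γ t).comp ((x - F).comp (γ t⁻¹)) ∂μ := by
      have hptw : ∀ t : G, (γ t).comp ((x - F).comp (γ t⁻¹))
          = x - (γ t).comp (F.comp (γ t⁻¹)) := by
        intro t
        rw [ContinuousLinearMap.sub_comp, ContinuousLinearMap.comp_sub, hfix t]
      rw [show (fun t => (γ t).comp ((x - F).comp (γ t⁻¹)))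
          = fun t => x - (γ t).comp (F.comp (γ t⁻¹)) from funext hptw]
      rw [integral_sub (integrable_const x) hFint, integral_const]
      simp [hyeq]
    have hbound : ‖x - y‖ ≤ 2 * δ := by
      rw [hxy]
      have hae : ∀ᵐ t ∂μ, ‖(γ t).comp ((x - F).comp (γ t⁻¹))‖ ≤ 2 * δ := by
        refine Filter.Eventually.of_forall fun t => ?_
        calc ‖(γ t).comp ((x - F).comp (γ t⁻¹))‖
            ≤ ‖γ t‖ * ‖(x - F).comp (γ t⁻¹)‖ := ContinuousLinearMap.opNorm_comp_le _ _
          _ ≤ ‖γ t‖ * (‖x - F‖ * ‖γ t⁻¹‖) := by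
              gcongr
              exact ContinuousLinearMap.opNorm_comp_le _ _
          _ ≤ 1 * ((2 * δ) * 1) :=
              mul_le_mul (hγle t)
                (mul_le_mul hxF (hγle t⁻¹) (norm_nonneg _) (by linarith))
                (mul_nonneg (norm_nonneg _) (norm_nonneg _)) zero_le_one
          _ = 2 * δ := by ring
      calc ‖∫ t, (γ t).comp ((x - F).comp (γ t⁻¹)) ∂μ‖
          ≤ 2 * δ * (μ Set.univ).toReal := norm_integral_le_of_norm_le_const hae
        _ = 2 * δ := by simp
    refine ⟨y, hymem, ?_⟩
    rw [dist_eq_norm]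
    calc ‖x - y‖ ≤ 2 * δ := hbound
      _ < ε := by rw [hδdef]; linarith
end
end
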